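/- Let F be a distribution on [0,∞) with F^{*n} ∈ L(γ) for some integer n ≥ 2 and γ ≥ 0. If F̄(x) = o((F^{*2})̄(x)) as x → ∞, then F^{*k} ∈ L(γ) for every integer k ≥ n. -/

import Mathlib

open MeasureTheory Filter Set Asymptotics

/-- The tail `F̄(x) = μ((x,∞))` of a distribution `μ` on `ℝ`. -/
noncomputable def tail (μ : MeasureTheory.Measure ℝ) (x : ℝ) : ℝ := (μ (Set.Ioi x)).toReal

/-- Convolution of two distributions on `ℝ`. -/
noncomputable def mconv (μ ν : MeasureTheory.Measure ℝ) : MeasureTheory.Measure ℝ :=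
  MeasureTheory.Measure.map (fun p : ℝ × ℝ => p.1 + p.2) (μ.prod ν)

/-- `iconv μ k` is the `k`-fold convolution `μ^{*k}` (with `μ^{*0} = δ₀`). -/
noncomputable def iconv (μ : MeasureTheory.Measure ℝ) : ℕ → MeasureTheory.Measure ℝ
  | 0 => MeasureTheory.Measure.dirac 0
  | n + 1 => mconv (iconv μ n) μ

/-- The class `L(γ)`: `F̄(x-t) ~ e^{γt} F̄(x)` as `x → ∞`, for every `t`. -/
def MemL (γ : ℝ) (μ : MeasureTheory.Measure ℝ) : Prop :=
  ∀ t : ℝ, Filter.Tendsto (fun x => tail μ (x - t) / tail μ x) Filter.atTop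
    (nhds (Real.exp (γ * t)))

/-- The class `OS`: `limsup_{x→∞} (F*F)̄(x) / F̄(x) < ∞`. -/
def MemOS (μ : MeasureTheory.Measure ℝ) : Prop :=
  Filter.IsBoundedUnder (· ≤ ·) Filter.atTop (fun x => tail (mconv μ μ) x / tail μ x)

/-! ### Auxiliary lemmas -/

lemma meas_slice (μ : Measure ℝ) (x : ℝ) : Measurable (fun y => μ (Set.Ioi (x - y))) := by
  apply Monotone.measurable
  intro a b hab
  exact measure_mono (fun z hz => lt_of_le_of_lt (show x - b ≤ x - a by linarith) hz)

lemma mconv_apply_Ioi (μ ν : Measure ℝ) [SFinite μ] [SFinite ν] (x : ℝ) :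
    mconv μ ν (Set.Ioi x) = ∫⁻ y, μ (Set.Ioi (x - y)) ∂ν := by
  rw [mconv, Measure.map_apply (by fun_prop : Measurable (fun p : ℝ × ℝ => p.1 + p.2)) measurableSet_Ioi,
    Measure.prod_apply_symm ((by fun_prop : Measurable (fun p : ℝ × ℝ => p.1 + p.2)) measurableSet_Ioi)]
  congr 1
  ext y
  congr 1
  ext z
  simp [sub_lt_iff_lt_add]

instance isProbabilityMeasure_mconv (μ ν : Measure ℝ) [IsProbabilityMeasure μ]
    [IsProbabilityMeasure ν] : IsProbabilityMeasure (mconv μ ν) :=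
  Measure.isProbabilityMeasure_map (by fun_prop : Measurable (fun p : ℝ × ℝ => p.1 + p.2)).aemeasurable

lemma mconv_Iio_zero (μ ν : Measure ℝ) [SFinite μ] [SFinite ν]
    (hμ : μ (Set.Iio 0) = 0) (hν : ν (Set.Iio 0) = 0) : mconv μ ν (Set.Iio 0) = 0 := by
  rw [mconv, Measure.map_apply (by fun_prop : Measurable (fun p : ℝ × ℝ => p.1 + p.2)) measurableSet_Iio]
  apply measure_mono_null (t := (Set.Iio 0 ×ˢ Set.univ) ∪ (Set.univ ×ˢ Set.Iio 0))
  · rintro ⟨a, b⟩ hab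
    simp only [Set.mem_preimage, Set.mem_Iio] at hab
    by_contra hc
    simp only [Set.mem_union, Set.mem_prod, Set.mem_Iio, Set.mem_univ, and_true, true_and,
      not_or, not_lt] at hc
    linarith [hc.1, hc.2]
  · apply measure_union_null <;> simp [Measure.prod_prod, hμ, hν]

lemma le_mconv (μ ν : Measure ℝ) [SFinite μ] [IsProbabilityMeasure ν]
    (hν : ν (Set.Iio 0) = 0) (x : ℝ) : μ (Set.Ioi x) ≤ mconv μ ν (Set.Ioi x) := by
  rw [mconv_apply_Ioi]
  have h0 : μ (Set.Ioi x) = ∫⁻ _, μ (Set.Ioi x) ∂ν := by simp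
  rw [h0]
  apply lintegral_mono_ae
  have hae : ∀ᵐ y ∂ν, 0 ≤ y := by
    rw [ae_iff]
    simp only [not_le]; exact hν
  filter_upwards [hae] with y hy
  exact measure_mono (fun z hz => lt_of_le_of_lt (show x - y ≤ x by linarith) hz)

lemma tail_nonneg' (μ : Measure ℝ) (x : ℝ) : 0 ≤ tail μ x := ENNReal.toReal_nonneg

lemma tail_pos_of_memL {γ : ℝ} {G : Measure ℝ} [IsProbabilityMeasure G] (hG : MemL γ G)
    (x : ℝ) : 0 < tail G x := by
  rcases (tail_nonneg' G x).lt_or_eq with h | h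
  · exact h
  exfalso
  have hx0 : G (Set.Ioi x) = 0 := by
    have := (ENNReal.toReal_eq_zero_iff _).mp h.symm
    simpa [measure_ne_top G] using this
  have hz : ∀ z ≥ x, tail G z = 0 := by
    intro z hz
    have : G (Set.Ioi z) = 0 :=
      measure_mono_null (fun w hw => lt_of_le_of_lt hz hw) hx0
    simp [tail, this]
  have h1 : Filter.Tendsto (fun z => tail G (z - 0) / tail G z) Filter.atTop (nhds 1) := by
    simpa using hG 0
  have h2 : Filter.Tendsto (fun z => tail G (z - 0) / tail G z) Filter.atTop (nhds 0) := by
    apply Filter.Tendsto.congr' _ tendsto_const_nhds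
    filter_upwards [Filter.eventually_ge_atTop x] with z hzx
    simp [hz z hzx]
  exact one_ne_zero (tendsto_nhds_unique h1 h2)

set_option maxHeartbeats 1000000 in
/-- Key lemma: if `G ∈ L(γ)` and `H̄ = o(Ḡ)`, with both supported on `[0,∞)`,
then `G * H ∈ L(γ)`. -/
lemma memL_mconv {γ : ℝ} (hγ : 0 ≤ γ) (G H : Measure ℝ) [IsProbabilityMeasure G]
    [IsProbabilityMeasure H] (hH0 : H (Set.Iio 0) = 0) (hGL : MemL γ G)
    (ho : (fun x => tail H x) =o[Filter.atTop] (fun x => tail G x)) : MemL γ (mconv G H) := by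
  have hGpos : ∀ x, 0 < tail G x := tail_pos_of_memL hGL
  have hGM : ∀ x, tail G x ≤ tail (mconv G H) x := fun x =>
    ENNReal.toReal_mono (measure_ne_top (mconv G H) _) (le_mconv G H hH0 x)
  have hMpos : ∀ x, 0 < tail (mconv G H) x := fun x => lt_of_lt_of_le (hGpos x) (hGM x)
  suffices hpos : ∀ t : ℝ, 0 ≤ t → Filter.Tendsto (fun x => tail (mconv G H) (x - t) /
      tail (mconv G H) x) Filter.atTop (nhds (Real.exp (γ * t))) by
    intro t
    rcases le_or_gt 0 t with ht | ht
    · exact hpos t ht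
    · have hs : (0:ℝ) ≤ -t := by linarith
      have h1 := (hpos (-t) hs).comp (tendsto_atTop_add_const_right Filter.atTop (-t) tendsto_id)
      have h1' : Filter.Tendsto (fun x => tail (mconv G H) x / tail (mconv G H) (x + -t))
          Filter.atTop (nhds (Real.exp (γ * -t))) := by
        apply h1.congr
        intro x
        have : x + -t - -t = x := by ring
        simp only [Function.comp, id_eq, this]
      have h2 := h1'.inv₀ (Real.exp_ne_zero _)
      have hinv : (Real.exp (γ * -t))⁻¹ = Real.exp (γ * t) := by
        rw [← Real.exp_neg]
        congr 1
        ring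
      rw [hinv] at h2
      apply h2.congr
      intro x
      rw [inv_div, sub_eq_add_neg]
  intro t ht
  set E := Real.exp (γ * t) with hE
  have hE1 : 1 ≤ E := Real.one_le_exp (mul_nonneg hγ ht)
  rw [Metric.tendsto_nhds]
  intro ε hε
  set δ := min (ε / (2 * (1 + E))) (1/2) with hδdef
  have hδpos : 0 < δ := lt_min (by positivity) (by norm_num)
  have hδhalf : δ ≤ 1/2 := min_le_right _ _
  have hδε : δ ≤ ε / (2 * (1 + E)) := min_le_left _ _
  have hTex : ∃ T : ℝ, ∀ s ≥ T, tail G (s - t) ≤ (E + δ) * tail G s ∧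
      (E - δ) * tail G s ≤ tail G (s - t) := by
    have := (Metric.tendsto_nhds.mp (hGL t)) δ hδpos
    rw [Filter.eventually_atTop] at this
    obtain ⟨T, hT⟩ := this
    refine ⟨T, fun s hs => ?_⟩
    have h1 := hT s hs
    rw [Real.dist_eq, abs_lt] at h1
    have hpos := hGpos s
    constructor
    · nlinarith [(div_lt_iff₀ hpos).mp (by linarith [h1.2] :
        tail G (s - t) / tail G s < E + δ)]
    · nlinarith [(lt_div_iff₀ hpos).mp (by linarith [h1.1] :
        E - δ < tail G (s - t) / tail G s)]
  obtain ⟨T, hT⟩ := hTex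
  set c := t + T with hc
  have key : ∀ x : ℝ, tail (mconv G H) (x - t) ≤ (E + δ) * tail (mconv G H) x + tail H (x - c) ∧
      (E - δ) * (tail (mconv G H) x - tail H (x - c)) ≤ tail (mconv G H) (x - t) := by
    intro x
    set S : Set ℝ := Set.Iic (x - c) with hS
    have hSm : MeasurableSet S := measurableSet_Iic
    set I₁ := ∫⁻ y in S, G (Set.Ioi (x - t - y)) ∂H with hI₁
    set I₂ := ∫⁻ y in Sᶜ, G (Set.Ioi (x - t - y)) ∂H with hI₂
    set J₁ := ∫⁻ y in S, G (Set.Ioi (x - y)) ∂H with hJ₁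
    set J₂ := ∫⁻ y in Sᶜ, G (Set.Ioi (x - y)) ∂H with hJ₂
    have split1 : mconv G H (Set.Ioi (x - t)) = I₁ + I₂ := by
      rw [mconv_apply_Ioi, ← lintegral_add_compl (fun y => G (Set.Ioi ((x - t) - y))) hSm]
    have split2 : mconv G H (Set.Ioi x) = J₁ + J₂ := by
      rw [mconv_apply_Ioi, ← lintegral_add_compl (fun y => G (Set.Ioi (x - y))) hSm]
    have hptwise : ∀ y ∈ S, G (Set.Ioi (x - t - y)) ≤ ENNReal.ofReal (E + δ) * G (Set.Ioi (x - y))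
        ∧ ENNReal.ofReal (E - δ) * G (Set.Ioi (x - y)) ≤ G (Set.Ioi (x - t - y)) := by
      intro y hy
      have hyx : x - y ≥ T := by
        simp only [hS, Set.mem_Iic] at hy
        simp only [hc] at hy
        linarith
      obtain ⟨hu, hl⟩ := hT (x - y) hyx
      have e1 : x - t - y = (x - y) - t := by ring
      have htg : ∀ s : ℝ, G (Set.Ioi s) = ENNReal.ofReal (tail G s) := fun s =>
        (ENNReal.ofReal_toReal (measure_ne_top G _)).symm
      constructor
      · rw [e1, htg, htg, ← ENNReal.ofReal_mul (by positivity)]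
        exact ENNReal.ofReal_le_ofReal hu
      · rw [e1, htg, htg, ← ENNReal.ofReal_mul (by nlinarith)]
        exact ENNReal.ofReal_le_ofReal hl
    have hI₁le : I₁ ≤ ENNReal.ofReal (E + δ) * J₁ := by
      rw [hI₁, hJ₁, ← lintegral_const_mul _ (meas_slice G x)]
      exact setLIntegral_mono ((meas_slice G x).const_mul _) (fun y hy => (hptwise y hy).1)
    have hJ₁le : ENNReal.ofReal (E - δ) * J₁ ≤ I₁ := by
      rw [hI₁, hJ₁, ← lintegral_const_mul _ (meas_slice G x)]
      exact setLIntegral_mono (meas_slice G (x - t)) (fun y hy => (hptwise y hy).2)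
    have hI₂le : I₂ ≤ H (Set.Ioi (x - c)) := by
      have h0 : I₂ ≤ ∫⁻ _ in Sᶜ, 1 ∂H := setLIntegral_mono measurable_const
        (fun y _ => prob_le_one)
      simpa [hS] using h0
    have hJ₂le : J₂ ≤ H (Set.Ioi (x - c)) := by
      have h0 : J₂ ≤ ∫⁻ _ in Sᶜ, 1 ∂H := setLIntegral_mono measurable_const
        (fun y _ => prob_le_one)
      simpa [hS] using h0
    have hMfin : ∀ z, mconv G H (Set.Ioi z) ≠ ⊤ := fun z => measure_ne_top _ _
    have hI₁fin : I₁ ≠ ⊤ := fun hcon =>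
      hMfin (x - t) (by rw [split1, hcon]; simp)
    have hI₂fin : I₂ ≠ ⊤ := fun hcon =>
      hMfin (x - t) (by rw [split1, hcon]; simp)
    have hJ₁fin : J₁ ≠ ⊤ := fun hcon =>
      hMfin x (by rw [split2, hcon]; simp)
    have hJ₂fin : J₂ ≠ ⊤ := fun hcon =>
      hMfin x (by rw [split2, hcon]; simp)
    have hr1 : tail (mconv G H) (x - t) = I₁.toReal + I₂.toReal := by
      rw [tail, split1, ENNReal.toReal_add hI₁fin hI₂fin]
    have hr2 : tail (mconv G H) x = J₁.toReal + J₂.toReal := by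
      rw [tail, split2, ENNReal.toReal_add hJ₁fin hJ₂fin]
    have hrI₁ : I₁.toReal ≤ (E + δ) * J₁.toReal := by
      have h0 := ENNReal.toReal_mono
        (ENNReal.mul_ne_top ENNReal.ofReal_ne_top hJ₁fin) hI₁le
      rwa [ENNReal.toReal_mul, ENNReal.toReal_ofReal (by positivity)] at h0
    have hrJ₁ : (E - δ) * J₁.toReal ≤ I₁.toReal := by
      have h0 := ENNReal.toReal_mono hI₁fin hJ₁le
      rwa [ENNReal.toReal_mul, ENNReal.toReal_ofReal (by nlinarith)] at h0
    have hrI₂ : I₂.toReal ≤ tail H (x - c) := ENNReal.toReal_mono (measure_ne_top H _) hI₂le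
    have hrJ₂ : J₂.toReal ≤ tail H (x - c) := ENNReal.toReal_mono (measure_ne_top H _) hJ₂le
    have hJ₁nn : 0 ≤ J₁.toReal := ENNReal.toReal_nonneg
    have hI₂nn : 0 ≤ I₂.toReal := ENNReal.toReal_nonneg
    have hJ₂nn : 0 ≤ J₂.toReal := ENNReal.toReal_nonneg
    have hEδnn : (0:ℝ) ≤ E + δ := by linarith
    have hEδnn' : (0:ℝ) ≤ E - δ := by linarith
    constructor
    · have h3 : (E + δ) * J₁.toReal ≤ (E + δ) * (J₁.toReal + J₂.toReal) :=
        mul_le_mul_of_nonneg_left (by linarith) hEδnn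
      rw [hr1, hr2]
      linarith
    · have h3 : (E - δ) * (tail (mconv G H) x - tail H (x - c)) ≤ (E - δ) * J₁.toReal := by
        apply mul_le_mul_of_nonneg_left _ hEδnn'
        rw [hr2]
        linarith
      rw [hr1]
      linarith
  have hec : ∀ᶠ x in Filter.atTop, tail H (x - c) ≤ δ * tail (mconv G H) x := by
    set c₀ := δ / (Real.exp (γ * c) + 1) with hc₀
    have hexpc : (0:ℝ) < Real.exp (γ * c) + 1 := by positivity
    have hc₀pos : 0 < c₀ := by positivity
    have h1 : ∀ᶠ x in Filter.atTop, tail H x ≤ c₀ * tail G x := by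
      filter_upwards [ho.bound hc₀pos] with x hx
      rwa [Real.norm_eq_abs, Real.norm_eq_abs, abs_of_nonneg (tail_nonneg' H x),
        abs_of_nonneg (tail_nonneg' G x)] at hx
    have hshift : Filter.Tendsto (fun x : ℝ => x - c) Filter.atTop Filter.atTop :=
      tendsto_atTop_add_const_right Filter.atTop (-c) tendsto_id
    have h1' : ∀ᶠ x in Filter.atTop, tail H (x - c) ≤ c₀ * tail G (x - c) :=
      hshift.eventually h1
    have h2 : ∀ᶠ x in Filter.atTop, tail G (x - c) ≤ (Real.exp (γ * c) + 1) * tail G x := by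
      have h0 := (Metric.tendsto_nhds.mp (hGL c)) 1 one_pos
      filter_upwards [h0] with x hx
      rw [Real.dist_eq, abs_lt] at hx
      have hpos := hGpos x
      nlinarith [(div_lt_iff₀ hpos).mp (by linarith [hx.2] :
        tail G (x - c) / tail G x < Real.exp (γ * c) + 1)]
    filter_upwards [h1', h2] with x hx1 hx2
    calc tail H (x - c) ≤ c₀ * tail G (x - c) := hx1
      _ ≤ c₀ * ((Real.exp (γ * c) + 1) * tail G x) :=
          mul_le_mul_of_nonneg_left hx2 hc₀pos.le
      _ = δ * tail G x := by
          rw [hc₀]; field_simp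
      _ ≤ δ * tail (mconv G H) x := mul_le_mul_of_nonneg_left (hGM x) hδpos.le
  filter_upwards [hec] with x hx
  obtain ⟨k1, k2⟩ := key x
  have hMp := hMpos x
  have hHnn := tail_nonneg' H (x - c)
  have hup : tail (mconv G H) (x - t) / tail (mconv G H) x ≤ E + 2 * δ := by
    rw [div_le_iff₀ hMp]
    nlinarith
  have hlo : E - (1 + E) * δ ≤ tail (mconv G H) (x - t) / tail (mconv G H) x := by
    rw [le_div_iff₀ hMp]
    have hEδ0 : (0:ℝ) ≤ E - δ := by linarith
    have ha : (E - δ) * (tail (mconv G H) x - δ * tail (mconv G H) x) ≤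
        (E - δ) * (tail (mconv G H) x - tail H (x - c)) :=
      mul_le_mul_of_nonneg_left (by linarith) hEδ0
    have hb : (E - (1 + E) * δ) * tail (mconv G H) x ≤
        (E - δ) * (tail (mconv G H) x - δ * tail (mconv G H) x) := by
      nlinarith [mul_nonneg (mul_nonneg hδpos.le hδpos.le) hMp.le]
    linarith
  rw [Real.dist_eq, abs_lt]
  have hEδ2 : (1 + E) * δ ≤ ε / 2 := by
    have h0 : (0:ℝ) < 2 * (1 + E) := by positivity
    rw [le_div_iff₀ h0] at hδε
    linarith
  have h2δ : 2 * δ ≤ (1 + E) * δ := by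
    linarith [mul_nonneg (by linarith : (0:ℝ) ≤ E - 1) hδpos.le]
  constructor <;> [linarith; linarith]

lemma iconv_zero (F : Measure ℝ) : iconv F 0 = Measure.dirac 0 := rfl
lemma iconv_succ (F : Measure ℝ) (k : ℕ) : iconv F (k + 1) = mconv (iconv F k) F := rfl

instance iconv_prob (F : Measure ℝ) [IsProbabilityMeasure F] :
    ∀ k : ℕ, IsProbabilityMeasure (iconv F k)
  | 0 => by rw [iconv_zero]; infer_instance
  | (k+1) => by
      rw [iconv_succ]
      have := iconv_prob F k
      infer_instance

lemma iconv_Iio (F : Measure ℝ) [IsProbabilityMeasure F] (hs : F (Set.Iio 0) = 0) :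
    ∀ k : ℕ, iconv F k (Set.Iio 0) = 0
  | 0 => by
      rw [iconv_zero]
      simp [Measure.dirac_apply' _ measurableSet_Iio]
  | (k+1) => by
      rw [iconv_succ]
      exact mconv_Iio_zero _ _ (iconv_Iio F hs k) hs

lemma tail_iconv_mono (F : Measure ℝ) [IsProbabilityMeasure F] (hs : F (Set.Iio 0) = 0)
    {k l : ℕ} (hkl : k ≤ l) (x : ℝ) : tail (iconv F k) x ≤ tail (iconv F l) x := by
  induction l, hkl using Nat.le_induction with
  | base => exact le_refl _
  | succ l hl ih =>
      apply le_trans ih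
      apply ENNReal.toReal_mono (measure_ne_top _ _)
      rw [iconv_succ]
      exact le_mconv _ _ hs x

theorem stmt4 (F : Measure ℝ) [IsProbabilityMeasure F] (hs : F (Set.Iio 0) = 0)
    (n : ℕ) (hn : 2 ≤ n) (γ : ℝ) (hγ : 0 ≤ γ) (hL : MemL γ (iconv F n))
    (h : (fun x => tail F x) =o[Filter.atTop] fun x => tail (iconv F 2) x) :
    ∀ k : ℕ, n ≤ k → MemL γ (iconv F k) := by
  intro k hk
  induction k, hk using Nat.le_induction with
  | base => exact hL
  | succ k hnk ih =>
      rw [iconv_succ]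
      apply memL_mconv hγ _ _ hs ih
      rw [isLittleO_iff]
      intro c hc
      filter_upwards [h.bound hc] with x hx
      calc ‖tail F x‖ ≤ c * ‖tail (iconv F 2) x‖ := hx
        _ ≤ c * ‖tail (iconv F k) x‖ := by
            apply mul_le_mul_of_nonneg_left _ hc.le
            rw [Real.norm_eq_abs, Real.norm_eq_abs, abs_of_nonneg (tail_nonneg' _ _),
              abs_of_nonneg (tail_nonneg' _ _)]
            exact tail_iconv_mono F hs (le_trans hn hnk) x
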